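/- Example 3.1 (failure of (EES) under (WEES)): Fix a player 1 ∈ N and a TU-game w ∈ V with Σ_{k∈N, k≠1} w({k}) ≠ 0, and define Φ : F → F by Φ_i(f)(v) = f_i(v) + (1/n)·(v(N) − Σ_{k∈N} f_k(v)) + f_i(w) − (1/n)·Σ_{k∈N} f_k(w) for all f ∈ F, i ∈ N and v ∈ V. Then: (a) Φ is an efficient extension operator; (b) Φ satisfies (ET) and (WEES); (c) Φ(f) satisfies (f-IES) for every f ∈ F; and (d) Φ does not satisfy (EES). -/

import Mathlib

/-!
Example 3.1: an efficient extension operator satisfying (ET), (WEES) and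
(`f`-IES) for every `f`, which nevertheless violates (EES).
-/

namespace Stmt9

/-- A TU-game on the player set `N`: a function on coalitions vanishing at `∅`. -/
abbrev Game (N : Type*) := {v : Finset N → ℝ // v ∅ = 0}

/-- A solution assigns to each game a payoff vector. -/
abbrev Solution (N : Type*) := Game N → N → ℝ

variable {N : Type*} [Fintype N] [DecidableEq N]

/-- Efficiency (E). -/
def Efficient (φ : Solution N) : Prop :=
  ∀ v : Game N, ∑ i, φ v i = v.1 Finset.univ

/-- Equal treatment (ET) for an operator. -/
def ET (Φ : Solution N → Solution N) : Prop :=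
  ∀ (f : Solution N) (i j : N), (∀ v, f v i = f v j) → ∀ v, Φ f v i = Φ f v j

/-- Equality for equal surplus (EES) for an operator. -/
def EES (Φ : Solution N → Solution N) : Prop :=
  ∀ (f f' : Solution N) (v : Game N) (i : N),
    (∑ k, f v k) = (∑ k, f' v k) → f v i = f' v i → Φ f v i = Φ f' v i

/-- Weak equality for equal surplus (WEES) for an operator. -/
def WEES (Φ : Solution N → Solution N) : Prop :=
  ∀ (f f' : Solution N) (i : N),
    (∀ v, (∑ k, f v k) = ∑ k, f' v k) → (∀ v, f v i = f' v i) →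
    ∀ v, Φ f v i = Φ f' v i

/-- The `f`-individualistic property for equal surplus (`f`-IES). -/
def IES (f φ : Solution N) : Prop :=
  ∀ (v w : Game N) (i : N),
    v.1 Finset.univ - ∑ k, f v k = w.1 Finset.univ - ∑ k, f w k →
    f v i = f w i → φ v i = φ w i

/-- Example 3.1: fixing a player `1 ∈ N` and a game `w` with
`Σ_{k ≠ 1} w({k}) ≠ 0`, the operator
`Φ_i(f)(v) = ESS_i(f)(v) + f_i(w) − (Σ_k f_k(w))/n` is an efficient extension
operator satisfying (ET), (WEES) and (`f`-IES) for each `f`, but not (EES). -/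
theorem example_wees_not_ees [Nonempty N]
    (one : N) (w : Game N)
    (hw : (∑ k ∈ Finset.univ.erase one, w.1 {k}) ≠ 0)
    (Φ : Solution N → Solution N)
    (hΦ : ∀ (f : Solution N) (v : Game N) (i : N),
      Φ f v i = f v i + (1 / (Fintype.card N : ℝ)) * (v.1 Finset.univ - ∑ k, f v k)
        + f w i - (1 / (Fintype.card N : ℝ)) * ∑ k, f w k) :
    (∀ f : Solution N, Efficient (Φ f)) ∧
    ET Φ ∧ WEES Φ ∧
    (∀ f : Solution N, IES f (Φ f)) ∧
    ¬ EES Φ := by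
  have hn : (Fintype.card N : ℝ) ≠ 0 := by
    exact_mod_cast Fintype.card_ne_zero
  refine ⟨?_, ?_, ?_, ?_, ?_⟩
  · intro f v
    simp only [hΦ, Finset.sum_add_distrib, Finset.sum_sub_distrib, Finset.sum_const,
      Finset.card_univ, nsmul_eq_mul]
    field_simp
    ring
  · intro f i j h v
    rw [hΦ, hΦ, h v, h w]
  · intro f f' i hsum hi v
    rw [hΦ, hΦ, hsum v, hsum w, hi v, hi w]
  · intro f v u i hs hi
    rw [hΦ, hΦ, hi, hs]
  · intro h
    set f0 : Solution N := fun _ _ => 0 with hf0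
    set f1 : Solution N := fun u k => if k = one then 0 else u.1 {k} with hf1
    set v0 : Game N := ⟨fun _ => 0, rfl⟩ with hv0
    have key : (∑ k, f1 w k) = ∑ k ∈ Finset.univ.erase one, w.1 {k} := by
      rw [← Finset.add_sum_erase Finset.univ _ (Finset.mem_univ one)]
      simp only [hf1, if_pos rfl, zero_add]
      exact Finset.sum_congr rfl fun k hk => if_neg (Finset.ne_of_mem_erase hk)
    have h1 := h f0 f1 v0 one (by simp [hf0, hf1, hv0]) (by simp [hf1, hf0])
    rw [hΦ, hΦ] at h1
    simp only [hf0, hf1, hv0, if_pos rfl, Finset.sum_const_zero] at h1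
    rw [key] at h1
    have : (1 / (Fintype.card N : ℝ)) * ∑ k ∈ Finset.univ.erase one, w.1 {k} = 0 := by
      have hz : (∑ k, (if k = one then (0:ℝ) else v0.1 {k})) = 0 := by simp [hv0]
      rw [hz] at h1
      linarith
    rcases mul_eq_zero.1 this with h2 | h2
    · exact hn (by rw [one_div, inv_eq_zero] at h2; exact h2)
    · exact hw h2


end Stmt9
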